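/- Let H₁, H₂ and K be real Hilbert spaces, S : H₂ → K and T : H₁ → K continuous linear maps, h ∈ K, and σ > 0. For each w₁ ∈ H₁ let F(w₁) ∈ H₂ denote the unique minimizer over w₂ ∈ H₂ of ½‖S w₂ + T w₁ + h‖²_K + (σ/2)‖w₂‖²_{H₂}. Then F(w₁) = −(σ·id + S*∘S)⁻¹(S*(T w₁ + h)); in particular F is an affine map, and it is Lipschitz with ‖F(w₁) − F(w₁')‖ ≤ (‖S‖·‖T‖/σ)·‖w₁ − w₁'‖ for all w₁, w₁' ∈ H₁. -/

import Mathlib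

open ContinuousLinearMap in
lemma stmt_9_key {H₂ K : Type*}
    [NormedAddCommGroup H₂] [InnerProductSpace ℝ H₂] [CompleteSpace H₂]
    [NormedAddCommGroup K] [InnerProductSpace ℝ K] [CompleteSpace K]
    (S : H₂ →L[ℝ] K) (b : K) (σ : ℝ) (hσ : 0 < σ) (u : H₂)
    (hmin : ∀ v : H₂, (1/2) * ‖S u + b‖ ^ 2 + (σ/2) * ‖u‖ ^ 2
      ≤ (1/2) * ‖S v + b‖ ^ 2 + (σ/2) * ‖v‖ ^ 2) :
    σ • u + (adjoint S) (S u + b) = 0 := by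
  set a := S u + b with ha
  set g := σ • u + (adjoint S) a with hg
  have hexp : ∀ v : H₂, 0 ≤ inner ℝ g v + (1/2) * ‖S v‖^2 + (σ/2) * ‖v‖^2 := by
    intro v
    have h1 := hmin (u + v)
    have h2 : S (u + v) + b = a + S v := by rw [ha, map_add]; abel
    rw [h2] at h1
    have h3 : ‖a + S v‖^2 = ‖a‖^2 + 2 * inner ℝ a (S v) + ‖S v‖^2 := norm_add_sq_real a (S v)
    have h4 : ‖u + v‖^2 = ‖u‖^2 + 2 * inner ℝ u v + ‖v‖^2 := norm_add_sq_real u v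
    have h5 : (inner ℝ ((adjoint S) a) v : ℝ) = inner ℝ a (S v) :=
      ContinuousLinearMap.adjoint_inner_left S v a
    have h6 : (inner ℝ g v : ℝ) = σ * inner ℝ u v + inner ℝ ((adjoint S) a) v := by
      rw [hg, inner_add_left, real_inner_smul_left]
    nlinarith [h1, h3, h4]
  have hgzero : g = 0 := by
    by_contra hne
    have hne' : 0 < ‖g‖ := norm_pos_iff.mpr hne
    have hG : 0 < ‖g‖^2 := by positivity
    set t : ℝ := ‖g‖^2 / (‖S g‖^2 + σ * ‖g‖^2 + 1) with ht
    have hden : 0 < ‖S g‖^2 + σ * ‖g‖^2 + 1 := by positivity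
    have h7 := hexp (-(t • g))
    have h8 : (inner ℝ g (-(t • g)) : ℝ) = -(t * ‖g‖^2) := by
      rw [inner_neg_right, real_inner_smul_right, real_inner_self_eq_norm_sq]
    have h9 : ‖S (-(t • g))‖^2 = t^2 * ‖S g‖^2 := by
      rw [map_neg, map_smul, norm_neg, norm_smul]
      rw [mul_pow]; congr 1; simp [sq_abs, Real.norm_eq_abs]
    have h10 : ‖(-(t • g))‖^2 = t^2 * ‖g‖^2 := by
      rw [norm_neg, norm_smul, mul_pow]; congr 1; simp [sq_abs, Real.norm_eq_abs]
    rw [h8, h9, h10] at h7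
    have ht2 : t * (‖S g‖^2 + σ * ‖g‖^2 + 1) = ‖g‖^2 := by
      rw [ht]; exact div_mul_cancel₀ _ hden.ne'
    nlinarith [h7, hG, sq_nonneg (‖S g‖), mul_pos (div_pos hG hden) hG]
  rw [hg] at hgzero
  exact hgzero

theorem stmt_9 {H₁ H₂ K : Type*}
    [NormedAddCommGroup H₁] [InnerProductSpace ℝ H₁] [CompleteSpace H₁]
    [NormedAddCommGroup H₂] [InnerProductSpace ℝ H₂] [CompleteSpace H₂]
    [NormedAddCommGroup K] [InnerProductSpace ℝ K] [CompleteSpace K]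
    (S : H₂ →L[ℝ] K) (T : H₁ →L[ℝ] K) (h : K) (σ : ℝ) (hσ : 0 < σ)
    (J₂ : H₁ → H₂ → ℝ)
    (hJ₂ : ∀ w₁ w₂, J₂ w₁ w₂
      = (1 / 2) * ‖S w₂ + T w₁ + h‖ ^ 2 + (σ / 2) * ‖w₂‖ ^ 2)
    (F : H₁ → H₂)
    (hF : ∀ w₁, ∀ w2h : H₂, J₂ w₁ (F w₁) ≤ J₂ w₁ w2h) :
    (∀ e : H₂ ≃L[ℝ] H₂, (e : H₂ →L[ℝ] H₂)
        = σ • ContinuousLinearMap.id ℝ H₂ + (ContinuousLinearMap.adjoint S).comp S →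
      ∀ w₁, F w₁ = -e.symm (ContinuousLinearMap.adjoint S (T w₁ + h))) ∧
    (∀ w₁ w₁' : H₁, ∀ θ : ℝ,
      F (θ • w₁ + (1 - θ) • w₁') = θ • F w₁ + (1 - θ) • F w₁') ∧
    (∀ w₁ w₁' : H₁, ‖F w₁ - F w₁'‖ ≤ (‖S‖ * ‖T‖ / σ) * ‖w₁ - w₁'‖) := by
  set A : H₂ →L[ℝ] H₂ :=
    σ • ContinuousLinearMap.id ℝ H₂ + (ContinuousLinearMap.adjoint S).comp S with hA
  have keyA : ∀ w₁, A (F w₁) = -(ContinuousLinearMap.adjoint S (T w₁ + h)) := by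
    intro w₁
    have hm : ∀ v : H₂, (1/2) * ‖S (F w₁) + (T w₁ + h)‖ ^ 2 + (σ/2) * ‖F w₁‖ ^ 2
        ≤ (1/2) * ‖S v + (T w₁ + h)‖ ^ 2 + (σ/2) * ‖v‖ ^ 2 := by
      intro v
      have := hF w₁ v
      rw [hJ₂, hJ₂] at this
      have e1 : S (F w₁) + T w₁ + h = S (F w₁) + (T w₁ + h) := by abel
      have e2 : S v + T w₁ + h = S v + (T w₁ + h) := by abel
      rw [e1, e2] at this
      convert this using 3 <;> norm_num
    have hk := stmt_9_key S (T w₁ + h) σ hσ (F w₁) hm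
    have : A (F w₁) = σ • F w₁ + (ContinuousLinearMap.adjoint S) (S (F w₁)) := by
      simp [hA]
    rw [this]
    rw [map_add] at hk
    linear_combination (norm := module) hk
  -- coercivity / injectivity of A
  have hcoer : ∀ z : H₂, (inner ℝ (A z) z : ℝ) = σ * ‖z‖^2 + ‖S z‖^2 := by
    intro z
    simp only [hA, ContinuousLinearMap.add_apply, ContinuousLinearMap.smul_apply,
      ContinuousLinearMap.coe_comp', ContinuousLinearMap.id_apply, Function.comp_apply]
    rw [inner_add_left, real_inner_smul_left, ContinuousLinearMap.adjoint_inner_left,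
      real_inner_self_eq_norm_sq, real_inner_self_eq_norm_sq]
  have hinj : ∀ x y : H₂, A x = A y → x = y := by
    intro x y hxy
    have hz : A (x - y) = 0 := by rw [map_sub, hxy, sub_self]
    have := hcoer (x - y)
    rw [hz, inner_zero_left] at this
    have hn : ‖x - y‖^2 = 0 := by nlinarith [sq_nonneg ‖S (x - y)‖, sq_nonneg ‖x - y‖]
    have hzn : ‖x - y‖ = 0 := by nlinarith [norm_nonneg (x - y)]
    exact sub_eq_zero.mp (norm_eq_zero.mp hzn)
  refine ⟨?_, ?_, ?_⟩
  · intro e he w₁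
    apply e.injective
    have h1 : e (F w₁) = A (F w₁) := by
      calc e (F w₁) = (e : H₂ →L[ℝ] H₂) (F w₁) := rfl
        _ = A (F w₁) := by rw [he]
    rw [h1, keyA, map_neg, e.apply_symm_apply]
  · intro w₁ w₁' θ
    apply hinj
    have hlin : A (θ • F w₁ + (1 - θ) • F w₁') = θ • A (F w₁) + (1 - θ) • A (F w₁') := by
      rw [map_add, map_smul, map_smul]
    rw [keyA, hlin, keyA, keyA]
    have harg : T (θ • w₁ + (1 - θ) • w₁') + h
        = θ • (T w₁ + h) + (1 - θ) • (T w₁' + h) := by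
      rw [map_add, map_smul, map_smul, smul_add, smul_add]
      module
    rw [harg, map_add, map_smul, map_smul]
    module
  · intro w₁ w₁' 
    set d := F w₁ - F w₁' with hd
    have hAd : A d = -(ContinuousLinearMap.adjoint S (T (w₁ - w₁'))) := by
      rw [hd, map_sub, keyA, keyA]
      simp only [map_sub, map_add]
      abel
    have h1 : σ * ‖d‖^2 ≤ (inner ℝ (A d) d : ℝ) := by
      rw [hcoer]; nlinarith [sq_nonneg ‖S d‖]
    have h2 : (inner ℝ (A d) d : ℝ) ≤ ‖S‖ * ‖T‖ * ‖w₁ - w₁'‖ * ‖d‖ := by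
      calc (inner ℝ (A d) d : ℝ) ≤ ‖A d‖ * ‖d‖ := real_inner_le_norm _ _
        _ ≤ ‖S‖ * ‖T‖ * ‖w₁ - w₁'‖ * ‖d‖ := by
          apply mul_le_mul_of_nonneg_right _ (norm_nonneg d)
          rw [hAd, norm_neg]
          calc ‖(ContinuousLinearMap.adjoint S) (T (w₁ - w₁'))‖
              ≤ ‖ContinuousLinearMap.adjoint S‖ * ‖T (w₁ - w₁')‖ :=
                ContinuousLinearMap.le_opNorm _ _
            _ ≤ ‖S‖ * (‖T‖ * ‖w₁ - w₁'‖) := by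
                apply mul_le_mul
                · exact le_of_eq (ContinuousLinearMap.adjoint.norm_map S)
                · exact ContinuousLinearMap.le_opNorm _ _
                · exact norm_nonneg _
                · exact norm_nonneg _
            _ = ‖S‖ * ‖T‖ * ‖w₁ - w₁'‖ := by ring
    by_cases hd0 : d = 0
    · rw [hd0, norm_zero]
      positivity
    · have hdn : 0 < ‖d‖ := norm_pos_iff.mpr hd0
      rw [div_mul_eq_mul_div, le_div_iff₀ hσ]
      nlinarith [h1, h2]
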